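/- arXiv:1311.6608 — 4 statements merged into one kernel-verified Lean document; each statement's English description precedes it below -/
import Mathlib

section
/- Let G be the graph whose vertex set is V = {∗} ∪ ({1,2,3} × ℕ), where ∗ is adjacent to (i,0) for each i ∈ {1,2,3}, and (i,n) is adjacent to (i,n+1) for all i and n, with no other adjacencies. Then the adjacency operator on ℓ²(V; ℝ), sending a function f to the function v ↦ Σ_{w adjacent to v} f(w), is a well-defined bounded self-adjoint operator of operator norm 3/√2. Moreover 3/√2 is an eigenvalue: the ℓ² function f with f(∗) = √2 and f(i,n) = 2^{−n/2} satisfies A f = (3/√2) f. -/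
/-- The vertex set of the infinite spider tree `T_{∞,∞,∞}`: a central vertex
`Sum.inl ()` together with three infinite rays `{1,2,3} × ℕ`. -/
abbrev SpiderV : Type := Unit ⊕ (Fin 3 × ℕ)

/-- The adjacency relation of the spider: the centre is adjacent to `(i, 0)`
for each `i`, and `(i, n)` is adjacent to `(i, n+1)`. -/
def spiderAdj : SpiderV → SpiderV → Bool
  | Sum.inl _, Sum.inl _ => false
  | Sum.inl _, Sum.inr (_, n) => n == 0
  | Sum.inr (_, n), Sum.inl _ => n == 0
  | Sum.inr (i, m), Sum.inr (j, n) => i == j && (m + 1 == n || n + 1 == m)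

namespace SpiderAux

open scoped ENNReal NNReal

noncomputable def lam : ℝ := 3 / Real.sqrt 2

noncomputable def hwt : SpiderV → ℝ
  | Sum.inl _ => Real.sqrt 2
  | Sum.inr (_, n) => (Real.sqrt 2)⁻¹ ^ n

def nbr : SpiderV → Finset SpiderV
  | Sum.inl _ => {Sum.inr (0, 0), Sum.inr (1, 0), Sum.inr (2, 0)}
  | Sum.inr (i, 0) => {Sum.inl (), Sum.inr (i, 1)}
  | Sum.inr (i, n+1) => {Sum.inr (i, n), Sum.inr (i, n+2)}

lemma adj_iff (v w : SpiderV) : spiderAdj v w = true ↔ w ∈ nbr v := by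
  rcases v with ⟨⟩ | ⟨i, m⟩ <;> rcases w with ⟨⟩ | ⟨j, n⟩
  · simp [spiderAdj, nbr]
  · have hj := j.isLt
    simp only [spiderAdj, nbr, Finset.mem_insert, Finset.mem_singleton, Sum.inr.injEq,
      Prod.mk.injEq, beq_iff_eq, Fin.ext_iff, Fin.val_zero, Fin.val_one, Fin.val_two]
    omega
  · cases m <;> simp [spiderAdj, nbr]
  · have hi := i.isLt; have hj := j.isLt
    cases m <;>
      simp only [spiderAdj, nbr, Finset.mem_insert, Finset.mem_singleton, Sum.inr.injEq,
        Prod.mk.injEq, beq_iff_eq, Fin.ext_iff, Bool.and_eq_true, Bool.or_eq_true,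
        reduceCtorEq, false_or, or_false] <;>
      omega

lemma adj_symm (v w : SpiderV) : spiderAdj v w = spiderAdj w v := by
  rcases v with ⟨⟩ | ⟨i, m⟩ <;> rcases w with ⟨⟩ | ⟨j, n⟩ <;>
      simp only [spiderAdj] <;> rw [Bool.eq_iff_iff] <;>
      simp only [Bool.and_eq_true, Bool.or_eq_true, beq_iff_eq, Fin.ext_iff] <;>
      omega

lemma tsum_adj {M : Type*} [AddCommMonoid M] [TopologicalSpace M] [T2Space M]
    (v : SpiderV) (u : SpiderV → M) :
    (∑' w, if spiderAdj v w then u w else 0) = ∑ w ∈ nbr v, u w := by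
  rw [tsum_eq_sum (s := nbr v) (f := fun w => if spiderAdj v w then u w else 0)
    (fun w hw => if_neg (fun h => hw ((adj_iff v w).1 h)))]
  exact Finset.sum_congr rfl fun w hw => if_pos ((adj_iff v w).2 hw)

lemma sqrt2_pos : (0:ℝ) < Real.sqrt 2 := Real.sqrt_pos.2 (by norm_num)

lemma sqrt2_sq : Real.sqrt 2 ^ 2 = 2 := Real.sq_sqrt (by norm_num)

lemma hwt_pos (v : SpiderV) : 0 < hwt v := by
  rcases v with ⟨⟩ | ⟨i, n⟩
  · exact sqrt2_pos
  · exact pow_pos (inv_pos.2 sqrt2_pos) n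

lemma sqrt2_inv_sq : (Real.sqrt 2)⁻¹ ^ 2 = (2:ℝ)⁻¹ := by
  rw [inv_pow, sqrt2_sq]

lemma lam_eq : lam = 3 * (Real.sqrt 2)⁻¹ := by rw [lam, div_eq_mul_inv]

lemma nbr_sum_hwt (v : SpiderV) : ∑ w ∈ nbr v, hwt w = lam * hwt v := by
  have h0 : Real.sqrt 2 ≠ 0 := ne_of_gt sqrt2_pos
  rcases v with ⟨⟩ | ⟨i, m⟩
  · rw [show nbr (Sum.inl ()) =
        ({Sum.inr (0,0), Sum.inr (1,0), Sum.inr (2,0)} : Finset SpiderV) from rfl,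
      Finset.sum_insert (by decide), Finset.sum_insert (by decide), Finset.sum_singleton]
    simp only [hwt, pow_zero]
    rw [lam, div_mul_cancel₀ _ h0]
    norm_num
  · cases m with
    | zero =>
        rw [show nbr (Sum.inr (i,0)) =
            ({Sum.inl (), Sum.inr (i,1)} : Finset SpiderV) from rfl,
          Finset.sum_insert (by simp), Finset.sum_singleton]
        simp only [hwt, pow_zero, pow_one, mul_one]
        rw [lam_eq]
        have h2 : Real.sqrt 2 * Real.sqrt 2 = 2 := Real.mul_self_sqrt (by norm_num)
        field_simp
        nlinarith
    | succ k =>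
        rw [show nbr (Sum.inr (i,k+1)) =
            ({Sum.inr (i,k), Sum.inr (i,k+2)} : Finset SpiderV) from rfl,
          Finset.sum_insert (by simp), Finset.sum_singleton]
        simp only [hwt]
        calc (Real.sqrt 2)⁻¹^k + (Real.sqrt 2)⁻¹^(k+2)
            = (Real.sqrt 2)⁻¹^k * (1 + ((Real.sqrt 2)⁻¹^2)) := by ring
          _ = (Real.sqrt 2)⁻¹^k * (3 * 2⁻¹) := by rw [sqrt2_inv_sq]; norm_num
          _ = (3 * (Real.sqrt 2)⁻¹) * (Real.sqrt 2)⁻¹^(k+1) := by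
              rw [pow_succ, ← sqrt2_inv_sq]; ring
          _ = lam * (Real.sqrt 2)⁻¹^(k+1) := by rw [lam_eq]

lemma card_nbr_le (v : SpiderV) : (nbr v).card ≤ 3 := by
  rcases v with ⟨⟩ | ⟨i, m⟩
  · exact (Finset.card_insert_le _ _).trans (by
      exact Nat.succ_le_succ ((Finset.card_insert_le _ _).trans (by simp)))
  · cases m <;>
      exact (Finset.card_insert_le _ _).trans (by simp)

/-- The raw adjacency operator as a map on functions. -/
noncomputable def spT (u : SpiderV → ℝ) (v : SpiderV) : ℝ := ∑ w ∈ nbr v, u w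

lemma spT_eigen (v : SpiderV) : spT hwt v = lam * hwt v := nbr_sum_hwt v

lemma lam_pos : 0 < lam := div_pos (by norm_num) sqrt2_pos

/-- pointwise weighted Cauchy–Schwarz -/
lemma spT_sq_le (u : SpiderV → ℝ) (v : SpiderV) :
    (spT u v)^2 ≤ lam * hwt v * ∑ w ∈ nbr v, (u w)^2 / hwt w := by
  rw [← nbr_sum_hwt v]
  exact Finset.sum_sq_le_sum_mul_sum_of_sq_eq_mul (nbr v)
    (fun w _ => (hwt_pos w).le)
    (fun w _ => div_nonneg (sq_nonneg _) (hwt_pos w).le)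
    (fun w _ => by field_simp [ne_of_gt (hwt_pos w)])

open ENNReal in
/-- The Schur-test bound, in `ℝ≥0∞`. -/
lemma schur (u : SpiderV → ℝ) :
    ∑' v, ENNReal.ofReal ((spT u v)^2)
      ≤ ENNReal.ofReal (lam^2) * ∑' v, ENNReal.ofReal ((u v)^2) := by
  have key : ∀ v, ENNReal.ofReal ((spT u v)^2)
      ≤ ∑' w, (if spiderAdj v w then
          ENNReal.ofReal (lam * hwt v) * ENNReal.ofReal ((u w)^2 / hwt w) else 0) := by
    intro v
    rw [tsum_adj]
    calc ENNReal.ofReal ((spT u v)^2)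
        ≤ ENNReal.ofReal (lam * hwt v * ∑ w ∈ nbr v, (u w)^2 / hwt w) :=
          ENNReal.ofReal_le_ofReal (spT_sq_le u v)
      _ = ∑ w ∈ nbr v, ENNReal.ofReal (lam * hwt v) * ENNReal.ofReal ((u w)^2 / hwt w) := by
          rw [Finset.mul_sum, ENNReal.ofReal_sum_of_nonneg (fun w _ =>
            mul_nonneg (mul_nonneg lam_pos.le (hwt_pos v).le)
              (div_nonneg (sq_nonneg _) (hwt_pos w).le))]
          exact Finset.sum_congr rfl fun w hw =>
            ENNReal.ofReal_mul (mul_nonneg lam_pos.le (hwt_pos v).le)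
  calc ∑' v, ENNReal.ofReal ((spT u v)^2)
      ≤ ∑' v, ∑' w, (if spiderAdj v w then
          ENNReal.ofReal (lam * hwt v) * ENNReal.ofReal ((u w)^2 / hwt w) else 0) :=
        ENNReal.tsum_le_tsum key
    _ = ∑' w, ∑' v, (if spiderAdj v w then
          ENNReal.ofReal (lam * hwt v) * ENNReal.ofReal ((u w)^2 / hwt w) else 0) :=
        ENNReal.tsum_comm
    _ = ∑' w, ENNReal.ofReal (lam^2) * ENNReal.ofReal ((u w)^2) := by
        refine tsum_congr fun w => ?_
        have hrw : (fun v => if spiderAdj v w then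
              ENNReal.ofReal (lam * hwt v) * ENNReal.ofReal ((u w)^2 / hwt w) else 0)
            = fun v => if spiderAdj w v then
              ENNReal.ofReal (lam * hwt v) * ENNReal.ofReal ((u w)^2 / hwt w) else 0 := by
          funext v; rw [adj_symm]
        rw [hrw, tsum_adj w (fun v =>
          ENNReal.ofReal (lam * hwt v) * ENNReal.ofReal ((u w)^2 / hwt w))]
        rw [← Finset.sum_mul]
        have h1 : ∑ v ∈ nbr w, ENNReal.ofReal (lam * hwt v)
            = ENNReal.ofReal (lam * (lam * hwt w)) := by
          rw [← ENNReal.ofReal_sum_of_nonneg (fun v _ =>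
            mul_nonneg lam_pos.le (hwt_pos v).le)]
          rw [← Finset.mul_sum, nbr_sum_hwt]
        rw [h1, ← ENNReal.ofReal_mul (mul_nonneg lam_pos.le
          (mul_nonneg lam_pos.le (hwt_pos w).le)),
          ← ENNReal.ofReal_mul (sq_nonneg lam)]
        congr 1
        have h0 : hwt w ≠ 0 := ne_of_gt (hwt_pos w)
        field_simp
    _ = ENNReal.ofReal (lam^2) * ∑' v, ENNReal.ofReal ((u v)^2) := ENNReal.tsum_mul_left

lemma tsum_ofReal_sq {u : SpiderV → ℝ} (hu : Summable fun v => (u v)^2) :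
    ∑' v, ENNReal.ofReal ((u v)^2) = ENNReal.ofReal (∑' v, (u v)^2) :=
  (ENNReal.ofReal_tsum_of_nonneg (fun v => sq_nonneg _) hu).symm

lemma summable_sq_spT {u : SpiderV → ℝ} (hu : Summable fun v => (u v)^2) :
    Summable (fun v => (spT u v)^2) := by
  have hne : (∑' v, ENNReal.ofReal ((spT u v)^2)) ≠ ⊤ := by
    refine ne_top_of_le_ne_top ?_ (schur u)
    rw [tsum_ofReal_sq hu]
    exact ENNReal.mul_ne_top ENNReal.ofReal_ne_top ENNReal.ofReal_ne_top
  exact (ENNReal.summable_toReal hne).congr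
    (fun v => ENNReal.toReal_ofReal (sq_nonneg _))

lemma tsum_sq_spT_le {u : SpiderV → ℝ} (hu : Summable fun v => (u v)^2) :
    ∑' v, (spT u v)^2 ≤ lam^2 * ∑' v, (u v)^2 := by
  rw [← ENNReal.ofReal_le_ofReal_iff
    (mul_nonneg (sq_nonneg _) (tsum_nonneg fun v => sq_nonneg _))]
  rw [ENNReal.ofReal_tsum_of_nonneg (fun v => sq_nonneg _) (summable_sq_spT hu),
    ENNReal.ofReal_mul (sq_nonneg _), ← tsum_ofReal_sq hu]
  exact schur u

lemma toReal_two : ((2:ℝ≥0∞)).toReal = 2 := by norm_num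

lemma rnorm_sq (x : ℝ) : ‖x‖ ^ ((2:ℝ≥0∞)).toReal = x^2 := by
  rw [toReal_two, show ((2:ℝ)) = ((2:ℕ):ℝ) by norm_num, Real.rpow_natCast,
    Real.norm_eq_abs, sq_abs]

lemma summable_sq_of_lp (f : lp (fun _ : SpiderV => ℝ) 2) :
    Summable fun v => ((f : ∀ _ : SpiderV, ℝ) v)^2 :=
  ((lp.memℓp f).summable (by norm_num)).congr (fun v => rnorm_sq _)

lemma memT (f : lp (fun _ : SpiderV => ℝ) 2) :
    Memℓp (fun v => spT (⇑f) v) 2 := by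
  apply memℓp_gen
  exact (summable_sq_spT (summable_sq_of_lp f)).congr (fun v => (rnorm_sq _).symm)

/-- The adjacency operator as a linear map on `ℓ²`. -/
noncomputable def Tlin : lp (fun _ : SpiderV => ℝ) 2 →ₗ[ℝ] lp (fun _ : SpiderV => ℝ) 2 where
  toFun f := ⟨fun v => spT (⇑f) v, memT f⟩
  map_add' f g := by
    apply lp.ext
    funext v
    have : spT (⇑(f + g)) v = spT (⇑f) v + spT (⇑g) v := by
      rw [lp.coeFn_add]
      simp [spT, Finset.sum_add_distrib]
    exact this
  map_smul' c f := by
    apply lp.ext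
    funext v
    have : spT (⇑(c • f)) v = c * spT (⇑f) v := by
      rw [lp.coeFn_smul]
      simp [spT, Finset.mul_sum]
    simpa [lp.coeFn_smul] using this

lemma Tlin_apply (f : lp (fun _ : SpiderV => ℝ) 2) (v : SpiderV) :
    (Tlin f : ∀ _ : SpiderV, ℝ) v = spT (⇑f) v := rfl

lemma Tlin_bound (f : lp (fun _ : SpiderV => ℝ) 2) : ‖Tlin f‖ ≤ lam * ‖f‖ := by
  apply lp.norm_le_of_tsum_le (by norm_num) (mul_nonneg lam_pos.le (norm_nonneg f))
  calc ∑' v, ‖(Tlin f : ∀ _ : SpiderV, ℝ) v‖ ^ ((2:ℝ≥0∞)).toReal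
      = ∑' v, (spT (⇑f) v)^2 := tsum_congr fun v => by rw [Tlin_apply, rnorm_sq]
    _ ≤ lam^2 * ∑' v, ((f : ∀ _ : SpiderV, ℝ) v)^2 := tsum_sq_spT_le (summable_sq_of_lp f)
    _ = lam^2 * ∑' v, ‖(f : ∀ _ : SpiderV, ℝ) v‖ ^ ((2:ℝ≥0∞)).toReal := by
        rw [tsum_congr fun v => (rnorm_sq ((f : ∀ _ : SpiderV, ℝ) v)).symm]
    _ = lam^2 * ‖f‖ ^ ((2:ℝ≥0∞)).toReal := by rw [← lp.norm_rpow_eq_tsum (by norm_num) f]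
    _ = (lam * ‖f‖) ^ ((2:ℝ≥0∞)).toReal := by
        rw [toReal_two, show ((2:ℝ)) = ((2:ℕ):ℝ) by norm_num, Real.rpow_natCast,
          Real.rpow_natCast, mul_pow]

/-- The adjacency operator as a continuous linear map. -/
noncomputable def Aop : lp (fun _ : SpiderV => ℝ) 2 →L[ℝ] lp (fun _ : SpiderV => ℝ) 2 :=
  Tlin.mkContinuous lam Tlin_bound

lemma Aop_apply (f : lp (fun _ : SpiderV => ℝ) 2) (v : SpiderV) :
    (Aop f : ∀ _ : SpiderV, ℝ) v = spT (⇑f) v := rfl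

/-! ### The eigenvector -/

def eRay : (Fin 3 × ℕ) ≃ {x : SpiderV // x ∉ ({Sum.inl ()} : Finset SpiderV)} where
  toFun p := ⟨Sum.inr p, by simp⟩
  invFun x := match x with
    | ⟨Sum.inl _, h⟩ => absurd (by simp) h
    | ⟨Sum.inr p, _⟩ => p
  left_inv p := rfl
  right_inv x := by
    rcases x with ⟨x | p, h⟩
    · exact absurd (by simp) h
    · rfl

lemma summable_hwt_sq : Summable (fun v : SpiderV => (hwt v)^2) := by
  rw [← Finset.summable_compl_iff ({Sum.inl ()} : Finset SpiderV)]
  rw [← eRay.summable_iff]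
  have hs : Summable (fun p : Fin 3 × ℕ => (2⁻¹:ℝ)^p.2) := by
    refine (summable_prod_of_nonneg (fun p => by positivity)).2 ⟨fun x => ?_, ?_⟩
    · exact summable_geometric_of_lt_one (by norm_num) (by norm_num)
    · exact Summable.of_finite
  refine hs.congr fun p => ?_
  show (2⁻¹:ℝ)^p.2 = (hwt (Sum.inr p))^2
  rcases p with ⟨i, n⟩
  show (2⁻¹:ℝ)^n = ((Real.sqrt 2)⁻¹ ^ n)^2
  rw [← pow_mul, mul_comm, pow_mul, sqrt2_inv_sq]

lemma memℓp_hwt : Memℓp hwt (2 : ℝ≥0∞) :=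
  memℓp_gen (summable_hwt_sq.congr fun v => (rnorm_sq _).symm)

noncomputable def f0 : lp (fun _ : SpiderV => ℝ) 2 := ⟨hwt, memℓp_hwt⟩

lemma f0_apply (v : SpiderV) : (f0 : ∀ _ : SpiderV, ℝ) v = hwt v := rfl

lemma f0_ne_zero : f0 ≠ 0 := by
  intro h
  have h1 : (f0 : ∀ _ : SpiderV, ℝ) (Sum.inl ()) = 0 := by rw [h]; rfl
  rw [f0_apply] at h1
  exact ne_of_gt (hwt_pos (Sum.inl ())) h1

lemma Aop_f0 : Aop f0 = lam • f0 := by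
  apply lp.ext
  funext v
  rw [Aop_apply]
  show spT hwt v = (lam • f0 : lp (fun _ : SpiderV => ℝ) 2) v
  rw [lp.coeFn_smul, Pi.smul_apply, f0_apply, smul_eq_mul]
  exact spT_eigen v

/-! ### Self-adjointness -/

open scoped InnerProductSpace in
lemma Aop_symm (f g : lp (fun _ : SpiderV => ℝ) 2) :
    (inner ℝ (Aop f) g : ℝ) = inner ℝ f (Aop g) := by
  classical
  set F : SpiderV → SpiderV → ℝ :=
    fun v w => if spiderAdj v w then (f : ∀ _ : SpiderV, ℝ) w * (g : ∀ _ : SpiderV, ℝ) v else 0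
    with hF
  -- summability of the double sum
  have hsum : Summable (Function.uncurry F) := by
    apply Summable.of_nnnorm
    rw [← ENNReal.tsum_coe_ne_top_iff_summable, ← lt_top_iff_ne_top]
    set a : SpiderV → ℝ≥0∞ := fun w => ENNReal.ofReal (((f : ∀ _ : SpiderV, ℝ) w)^2)
    set b : SpiderV → ℝ≥0∞ := fun v => ENNReal.ofReal (((g : ∀ _ : SpiderV, ℝ) v)^2)
    have hpt : ∀ v w, (‖Function.uncurry F (v, w)‖₊ : ℝ≥0∞)
        ≤ (if spiderAdj v w then a w else 0) + (if spiderAdj v w then b v else 0) := by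
      intro v w
      by_cases h : spiderAdj v w
      · simp only [Function.uncurry, hF, h, if_true]
        rw [← enorm_eq_nnnorm, ← ofReal_norm, ← ENNReal.ofReal_add (sq_nonneg _) (sq_nonneg _)]
        apply ENNReal.ofReal_le_ofReal
        rw [Real.norm_eq_abs, abs_mul]
        nlinarith [sq_nonneg (|(f : ∀ _ : SpiderV, ℝ) w| - |(g : ∀ _ : SpiderV, ℝ) v|),
          abs_nonneg ((f : ∀ _ : SpiderV, ℝ) w), abs_nonneg ((g : ∀ _ : SpiderV, ℝ) v),
          sq_abs ((f : ∀ _ : SpiderV, ℝ) w), sq_abs ((g : ∀ _ : SpiderV, ℝ) v)]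
      · simp [Function.uncurry, hF, h]
    have ha : ∑' w, a w ≠ ⊤ := by
      rw [tsum_ofReal_sq (summable_sq_of_lp f)]; exact ENNReal.ofReal_ne_top
    have hb : ∑' v, b v ≠ ⊤ := by
      rw [tsum_ofReal_sq (summable_sq_of_lp g)]; exact ENNReal.ofReal_ne_top
    have hcard : ∀ v : SpiderV, ((nbr v).card : ℝ≥0∞) ≤ 3 := by
      intro v
      exact_mod_cast Nat.cast_le.2 (card_nbr_le v)
    calc ∑' p : SpiderV × SpiderV, (‖Function.uncurry F p‖₊ : ℝ≥0∞)
        = ∑' v, ∑' w, (‖Function.uncurry F (v, w)‖₊ : ℝ≥0∞) := ENNReal.tsum_prod'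
      _ ≤ ∑' v, ∑' w, ((if spiderAdj v w then a w else 0)
            + (if spiderAdj v w then b v else 0)) :=
          ENNReal.tsum_le_tsum fun v => ENNReal.tsum_le_tsum fun w => hpt v w
      _ = (∑' v, ∑' w, (if spiderAdj v w then a w else 0))
            + ∑' v, ∑' w, (if spiderAdj v w then b v else 0) := by
          rw [← ENNReal.tsum_add]
          exact tsum_congr fun v => ENNReal.tsum_add
      _ ≤ 3 * (∑' w, a w) + 3 * (∑' v, b v) := by
          gcongr
          · calc ∑' v, ∑' w, (if spiderAdj v w then a w else 0)
                = ∑' w, ∑' v, (if spiderAdj v w then a w else 0) := ENNReal.tsum_comm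
              _ = ∑' w, ((nbr w).card : ℝ≥0∞) * a w := by
                  refine tsum_congr fun w => ?_
                  have : (fun v => if spiderAdj v w then a w else 0)
                      = fun v => if spiderAdj w v then a w else 0 := by
                    funext v; rw [adj_symm]
                  rw [this, tsum_adj w (fun _ => a w), Finset.sum_const, nsmul_eq_mul]
              _ ≤ ∑' w, 3 * a w := ENNReal.tsum_le_tsum fun w => by
                  gcongr; exact hcard w
              _ = 3 * ∑' w, a w := ENNReal.tsum_mul_left
          · calc ∑' v, ∑' w, (if spiderAdj v w then b v else 0)
                = ∑' v, ((nbr v).card : ℝ≥0∞) * b v := by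
                  refine tsum_congr fun v => ?_
                  rw [tsum_adj v (fun _ => b v), Finset.sum_const, nsmul_eq_mul]
              _ ≤ ∑' v, 3 * b v := ENNReal.tsum_le_tsum fun v => by
                  gcongr; exact hcard v
              _ = 3 * ∑' v, b v := ENNReal.tsum_mul_left
      _ < ⊤ := by
          apply ENNReal.add_lt_top.2
          constructor <;> exact ENNReal.mul_lt_top (by norm_num) (lt_top_iff_ne_top.2 (by assumption))
  -- slice summabilities
  have hrow : ∀ v, Summable (F v) := fun v =>
    summable_of_ne_finset_zero (s := nbr v) fun w hw =>
      if_neg fun h => hw ((adj_iff v w).1 h)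
  have hcol : ∀ w, Summable (fun v => F v w) := fun w => by
    refine summable_of_ne_finset_zero (s := nbr w) fun v hv => ?_
    refine if_neg fun h => hv ?_
    rw [adj_symm] at h
    exact (adj_iff w v).1 h
  -- the computation
  rw [lp.inner_eq_tsum, lp.inner_eq_tsum]
  calc ∑' v, inner ℝ ((Aop f : ∀ _ : SpiderV, ℝ) v) ((g : ∀ _ : SpiderV, ℝ) v)
      = ∑' v, ∑' w, F v w := by
        refine tsum_congr fun v => ?_
        rw [Aop_apply]
        have : ∑' w, F v w = ∑ w ∈ nbr v, (f : ∀ _ : SpiderV, ℝ) w * (g : ∀ _ : SpiderV, ℝ) v :=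
          tsum_adj v _
        rw [this, ← Finset.sum_mul]
        simp [spT, real_inner_comm, mul_comm]
    _ = ∑' w, ∑' v, F v w := (Summable.tsum_comm' hsum hrow hcol).symm
    _ = ∑' w, inner ℝ ((f : ∀ _ : SpiderV, ℝ) w) ((Aop g : ∀ _ : SpiderV, ℝ) w) := by
        refine tsum_congr fun w => ?_
        have h1 : (fun v => F v w) = fun v =>
            if spiderAdj w v then (f : ∀ _ : SpiderV, ℝ) w * (g : ∀ _ : SpiderV, ℝ) v else 0 := by
          funext v; rw [hF]; simp only; rw [adj_symm]
        rw [h1, tsum_adj w (fun v => (f : ∀ _ : SpiderV, ℝ) w * (g : ∀ _ : SpiderV, ℝ) v),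
          ← Finset.mul_sum, Aop_apply]
        simp [spT, mul_comm]

end SpiderAux

/-- The adjacency operator of the infinite spider tree is a well-defined
bounded self-adjoint operator on `ℓ²` of norm `3/√2`, and `3/√2` is an
eigenvalue, with eigenvector taking value `√2` at the centre and `2^{-n/2}`
at the `n`-th vertex of each ray. -/
theorem spider_adjacency_operator_norm :
    ∃ A : lp (fun _ : SpiderV => ℝ) 2 →L[ℝ] lp (fun _ : SpiderV => ℝ) 2,
      (∀ f : lp (fun _ : SpiderV => ℝ) 2, ∀ v : SpiderV,
        A f v = ∑' w : SpiderV, if spiderAdj v w then f w else 0) ∧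
      (∀ f g : lp (fun _ : SpiderV => ℝ) 2, (inner ℝ (A f) g : ℝ) = inner ℝ f (A g)) ∧
      ‖A‖ = 3 / Real.sqrt 2 ∧
      ∃ f₀ : lp (fun _ : SpiderV => ℝ) 2, f₀ ≠ 0 ∧
        f₀ (Sum.inl ()) = Real.sqrt 2 ∧
        (∀ i : Fin 3, ∀ n : ℕ, f₀ (Sum.inr (i, n)) = (Real.sqrt 2)⁻¹ ^ n) ∧
        A f₀ = (3 / Real.sqrt 2) • f₀ := by
  have hlam : SpiderAux.lam = 3 / Real.sqrt 2 := rfl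
  refine ⟨SpiderAux.Aop, ?_, SpiderAux.Aop_symm, ?_, SpiderAux.f0,
    SpiderAux.f0_ne_zero, rfl, fun i n => rfl, ?_⟩
  · intro f v
    rw [SpiderAux.tsum_adj v (⇑f)]
    exact SpiderAux.Aop_apply f v
  · have hle : ‖SpiderAux.Aop‖ ≤ SpiderAux.lam :=
      SpiderAux.Tlin.mkContinuous_norm_le SpiderAux.lam_pos.le SpiderAux.Tlin_bound
    have hge : SpiderAux.lam ≤ ‖SpiderAux.Aop‖ := by
      have h1 : ‖SpiderAux.Aop SpiderAux.f0‖ = SpiderAux.lam * ‖SpiderAux.f0‖ := by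
        rw [SpiderAux.Aop_f0, norm_smul, Real.norm_eq_abs, abs_of_pos SpiderAux.lam_pos]
      have h2 := SpiderAux.Aop.le_opNorm SpiderAux.f0
      rw [h1] at h2
      have h3 : 0 < ‖SpiderAux.f0‖ := norm_pos_iff.2 SpiderAux.f0_ne_zero
      exact le_of_mul_le_mul_right h2 h3
    rw [← hlam]
    exact le_antisymm hle hge
  · rw [← hlam]
    exact SpiderAux.Aop_f0
end

section
/- Let W be a real inner product space, T : W → W a surjective linear isometry, and ζ ∈ W. On V = ℝ × W × ℝ define the symmetric bilinear form B((a,y,z),(a',y',z')) = a z' + a' z − ⟨y, y'⟩, and define f : V → V by f(a,y,z) = (a + ⟨T y, ζ⟩ + (‖ζ‖²/2) z, T y + z ζ, z). Then: (i) B(f(x), f(x')) = B(x, x') for all x, x' ∈ V; (ii) for every x = (a,y,z) with B(x,x) = 1, one has B(f(x), x) = 1 + (1/2)‖z ζ + T y − y‖²; (iii) if moreover ‖T q + ζ − q‖ ≥ 1 for every q ∈ W, and x = (a,y,z) satisfies B(x,x) = 1, z > 0, and B(f(x), x) < cosh ε for some ε > 0, then z < 2 sinh(ε/2). -/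
/-- The horoball computation for parabolic isometries.  Let `W` be a real inner
product space, `T : W → W` a surjective linear isometry and `ζ ∈ W`.  On
`V = ℝ × W × ℝ` with the Lorentzian form `B((a,y,z),(a',y',z')) = a z' + a' z - ⟪y,y'⟫`
and the map `f(a,y,z) = (a + ⟪T y, ζ⟫ + (‖ζ‖²/2) z, T y + z ζ, z)`:
(i) `f` preserves `B`; (ii) if `B(x,x) = 1` then
`B(f x, x) = 1 + ½ ‖z ζ + T y - y‖²`; (iii) if in addition the affine map
`q ↦ T q + ζ` displaces every point by at least `1`, `B(x,x) = 1`, `z > 0`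
and `B(f x, x) < cosh ε` with `ε > 0`, then `z < 2 sinh (ε/2)`. -/
theorem parabolic_horoball_computation {W : Type*} [NormedAddCommGroup W]
    [InnerProductSpace ℝ W] (T : W →ₗ[ℝ] W) (hTsurj : Function.Surjective T)
    (hTiso : ∀ y : W, ‖T y‖ = ‖y‖) (ζ : W)
    (B : (ℝ × W × ℝ) → (ℝ × W × ℝ) → ℝ)
    (hB : ∀ x x' : ℝ × W × ℝ,
      B x x' = x.1 * x'.2.2 + x'.1 * x.2.2 - (inner ℝ x.2.1 x'.2.1 : ℝ))
    (f : (ℝ × W × ℝ) → (ℝ × W × ℝ))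
    (hf : ∀ x : ℝ × W × ℝ,
      f x = (x.1 + (inner ℝ (T x.2.1) ζ : ℝ) + (‖ζ‖ ^ 2 / 2) * x.2.2,
             T x.2.1 + x.2.2 • ζ, x.2.2)) :
    (∀ x x' : ℝ × W × ℝ, B (f x) (f x') = B x x') ∧
    (∀ x : ℝ × W × ℝ, B x x = 1 →
      B (f x) x = 1 + (1 / 2) * ‖x.2.2 • ζ + T x.2.1 - x.2.1‖ ^ 2) ∧
    ((∀ q : W, 1 ≤ ‖T q + ζ - q‖) →
      ∀ x : ℝ × W × ℝ, B x x = 1 → 0 < x.2.2 →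
        ∀ ε : ℝ, 0 < ε → B (f x) x < Real.cosh ε → x.2.2 < 2 * Real.sinh (ε / 2)) := by
  have hinner : ∀ y y' : W, (inner ℝ (T y) (T y') : ℝ) = inner ℝ y y' := fun y y' =>
    LinearIsometry.inner_map_map ⟨T, hTiso⟩ y y'
  have part2 : ∀ x : ℝ × W × ℝ, B x x = 1 →
      B (f x) x = 1 + (1 / 2) * ‖x.2.2 • ζ + T x.2.1 - x.2.1‖ ^ 2 := by
    intro x hx
    obtain ⟨a, y, z⟩ := x
    simp only [hB, hf] at hx ⊢
    have hexp : ‖z • ζ + T y - y‖ ^ 2 =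
        z ^ 2 * ‖ζ‖ ^ 2 + ‖y‖ ^ 2 + ‖y‖ ^ 2 + 2 * z * (inner ℝ (T y) ζ : ℝ)
          - 2 * z * (inner ℝ ζ y : ℝ) - 2 * (inner ℝ (T y) y : ℝ) := by
      rw [← real_inner_self_eq_norm_sq]
      simp only [inner_add_left, inner_add_right, inner_sub_left, inner_sub_right,
        real_inner_smul_left, real_inner_smul_right, hinner, real_inner_self_eq_norm_sq,
        real_inner_comm ζ (T y), real_inner_comm y ζ, real_inner_comm y (T y),
        norm_smul, Real.norm_eq_abs, mul_pow, sq_abs]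
      ring
    simp only [inner_add_left, inner_add_right, real_inner_smul_left, real_inner_smul_right,
      real_inner_self_eq_norm_sq, hinner, real_inner_comm (T y) ζ] at hx ⊢
    rw [hexp]
    nlinarith [hx]
  refine ⟨?_, part2, ?_⟩
  · intro x x'
    simp only [hB, hf]
    rw [inner_add_left, inner_add_right, inner_add_right, real_inner_smul_left,
      real_inner_smul_left, real_inner_smul_right, real_inner_smul_right, hinner,
      real_inner_comm ζ (T x'.2.1), real_inner_self_eq_norm_sq]
    ring
  · intro hdisp x hx hz ε hε hlt
    obtain ⟨a, y, z⟩ := x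
    dsimp only at hz
    have hq := hdisp (z⁻¹ • y)
    have hzne : z ≠ 0 := ne_of_gt hz
    have hv : z • (T (z⁻¹ • y) + ζ - z⁻¹ • y) = z • ζ + T y - y := by
      simp only [smul_add, smul_sub, map_smul, smul_smul, mul_inv_cancel₀ hzne, one_smul]
      abel1
    have hnorm : ‖z • ζ + T y - y‖ = z * ‖T (z⁻¹ • y) + ζ - z⁻¹ • y‖ := by
      rw [← hv, norm_smul, Real.norm_eq_abs, abs_of_pos hz]
    have hge : z ≤ ‖z • ζ + T y - y‖ := by
      rw [hnorm]
      nlinarith [norm_nonneg (T (z⁻¹ • y) + ζ - z⁻¹ • y)]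
    have h2 := part2 (a, y, z) hx
    have hcosh : Real.cosh ε = 1 + 2 * Real.sinh (ε / 2) ^ 2 := by
      have : ε = 2 * (ε / 2) := by ring
      rw [this, Real.cosh_two_mul, Real.cosh_sq]
      ring
    have hs : 0 < Real.sinh (ε / 2) := Real.sinh_pos_iff.mpr (by linarith)
    have : z ^ 2 < (2 * Real.sinh (ε / 2)) ^ 2 := by
      have : (1:ℝ) + (1/2) * z ^ 2 ≤ B (f (a,y,z)) (a,y,z) := by
        rw [h2]
        nlinarith [hge, hz]
      nlinarith [hlt, hcosh]
    exact lt_of_pow_lt_pow_left₀ 2 (by positivity) this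
end

section
/- Let V be a real vector space with a symmetric bilinear form B, and let x, v, w ∈ V satisfy B(x,x) = 1, B(v,v) = B(w,w) = 0, B(v,w) ≥ 1, B(x,v) > 0 and B(x,w) > 0. Assume there is no 2-dimensional subspace of the span of {x, v, w} on which B is positive definite. Then B(x,v) + B(x,w) ≥ √2. -/
/-- The Lorentzian reverse Cauchy–Schwarz estimate used in the uniqueness part
of the horoball theorem.  Let `B` be a symmetric bilinear form on a real vector
space `V` and let `x, v, w ∈ V` with `B(x,x) = 1`, `B(v,v) = B(w,w) = 0`,
`B(v,w) ≥ 1`, `B(x,v) > 0`, `B(x,w) > 0`.  If no `2`-dimensional subspace of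
`span {x, v, w}` is positive definite for `B`, then `B(x,v) + B(x,w) ≥ √2`. -/
theorem lorentzian_horoball_uniqueness {V : Type*} [AddCommGroup V] [Module ℝ V]
    (B : V →ₗ[ℝ] V →ₗ[ℝ] ℝ) (hsymm : ∀ a b : V, B a b = B b a)
    (x v w : V) (hx : B x x = 1) (hv : B v v = 0) (hw : B w w = 0)
    (hvw : 1 ≤ B v w) (hxv : 0 < B x v) (hxw : 0 < B x w)
    (hsig : ¬ ∃ S : Submodule ℝ V, S ≤ Submodule.span ℝ {x, v, w} ∧
      Module.finrank ℝ S = 2 ∧ ∀ y ∈ S, y ≠ 0 → 0 < B y y) :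
    Real.sqrt 2 ≤ B x v + B x w := by
  by_contra hcon
  push_neg at hcon
  set a := B x v with ha
  set b := B x w with hb
  set c := B v w with hc
  have hsq : (a + b) ^ 2 < 2 := by
    nlinarith [Real.sq_sqrt (show (0:ℝ) ≤ 2 by norm_num), Real.sqrt_nonneg 2]
  have hab : a * b < 1 / 2 := by nlinarith [sq_nonneg (a - b)]
  have habpos : 0 < a * b := mul_pos hxv hxw
  have hkey : 2 * (a * b) < c := by nlinarith
  set z : V := b • v + a • w with hz
  have hxz : B x z = 2 * (a * b) := by
    simp only [hz, map_add, map_smul, smul_eq_mul]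
    ring
  have hzx : B z x = 2 * (a * b) := by rw [hsymm z x, hxz]
  have hwv : B w v = c := by rw [hsymm w v, hc]
  have hzz : B z z = 2 * (a * b * c) := by
    simp only [hz, map_add, map_smul, LinearMap.add_apply, LinearMap.smul_apply,
      smul_eq_mul, hv, hw, ← hc, hwv]
    ring
  have hquad : ∀ s t : ℝ, B (s • x + t • z) (s • x + t • z)
      = s ^ 2 + 4 * (a * b) * (s * t) + 2 * (a * b * c) * t ^ 2 := by
    intro s t
    simp only [map_add, map_smul, LinearMap.add_apply, LinearMap.smul_apply,
      smul_eq_mul, hx, hxz, hzx, hzz]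
    ring
  have hpos : ∀ s t : ℝ, (s ≠ 0 ∨ t ≠ 0) →
      0 < B (s • x + t • z) (s • x + t • z) := by
    intro s t hst
    rw [hquad s t]
    rcases eq_or_ne t 0 with rfl | ht
    · have hs : s ≠ 0 := hst.resolve_right (by simp)
      have : 0 < s ^ 2 := by positivity
      nlinarith
    · have ht2 : 0 < t ^ 2 := by positivity
      nlinarith [sq_nonneg (s + 2 * (a * b) * t), mul_pos habpos ht2]
  apply hsig
  refine ⟨Submodule.span ℝ {x, z}, ?_, ?_, ?_⟩
  · apply Submodule.span_le.mpr
    intro y hy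
    rcases hy with rfl | rfl
    · exact Submodule.subset_span (by simp)
    · apply Submodule.add_mem <;> apply Submodule.smul_mem <;>
        exact Submodule.subset_span (by simp)
  · have hli : LinearIndependent ℝ ![x, z] := by
      rw [LinearIndependent.pair_iff]
      intro s t hst0
      by_contra hne
      push_neg at hne
      have h1 : s ≠ 0 ∨ t ≠ 0 := by tauto
      have := hpos s t h1
      rw [hst0] at this
      simp at this
    have := finrank_span_eq_card hli
    rw [show Set.range ![x, z] = {x, z} by simp [Matrix.range_cons, Matrix.range_empty, Set.pair_comm]] at this
    rw [this]
    simp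
  · intro y hy hy0
    obtain ⟨s, t, rfl⟩ := Submodule.mem_span_pair.mp hy
    apply hpos
    by_contra hne
    push_neg at hne
    obtain ⟨rfl, rfl⟩ := hne
    simp at hy0
end

section
/- Let μ = μ(2,3,7) be the largest eigenvalue of the adjacency matrix of the tree T_{2,3,7} (10 vertices: a central vertex with attached paths of 1, 2 and 6 vertices). Then μ > 2, and the unique real number m > 1 with m + m^{−1} + 2 = μ² is the largest real root of Lehmer's polynomial x^{10} + x^9 − x^7 − x^6 − x^5 − x^4 − x^3 + x + 1; in particular m is Lehmer's number. -/
/-- The vertex set of the tree `T_{p,q,r}`: a central vertex (`none`) together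
with three arms of `p-1`, `q-1` and `r-1` vertices. -/
abbrev TVertex (p q r : ℕ) : Type := Option (Fin (p - 1) ⊕ (Fin (q - 1) ⊕ Fin (r - 1)))

/-- Entry recording an edge between positions `i` and `j` of a path. -/
def pathEntry (i j : ℕ) : ℝ := if i + 1 = j ∨ j + 1 = i then 1 else 0

/-- Entry recording the edge from the central vertex to position `i` of an arm. -/
def tipEntry (i : ℕ) : ℝ := if i = 0 then 1 else 0

/-- The adjacency matrix of the tree `T_{p,q,r}`: a central vertex joined to one
end of each of three paths with `p-1`, `q-1`, and `r-1` vertices respectively. -/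
def adjT (p q r : ℕ) : Matrix (TVertex p q r) (TVertex p q r) ℝ :=
  fun v w =>
    match v, w with
    | none, none => 0
    | none, some (Sum.inl i) => tipEntry i
    | none, some (Sum.inr (Sum.inl i)) => tipEntry i
    | none, some (Sum.inr (Sum.inr i)) => tipEntry i
    | some (Sum.inl i), none => tipEntry i
    | some (Sum.inr (Sum.inl i)), none => tipEntry i
    | some (Sum.inr (Sum.inr i)), none => tipEntry i
    | some (Sum.inl i), some (Sum.inl j) => pathEntry i j
    | some (Sum.inr (Sum.inl i)), some (Sum.inr (Sum.inl j)) => pathEntry i j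
    | some (Sum.inr (Sum.inr i)), some (Sum.inr (Sum.inr j)) => pathEntry i j
    | _, _ => 0

/-- `μ(p,q,r)`, the largest eigenvalue of the adjacency matrix of `T_{p,q,r}`. -/
noncomputable def muT (p q r : ℕ) : ℝ :=
  sSup {μ : ℝ | ∃ x : TVertex p q r → ℝ, x ≠ 0 ∧ (adjT p q r).mulVec x = μ • x}

/-- Lehmer's polynomial `x^10 + x^9 - x^7 - x^6 - x^5 - x^4 - x^3 + x + 1`. -/
def lehmerPoly (x : ℝ) : ℝ :=
  x ^ 10 + x ^ 9 - x ^ 7 - x ^ 6 - x ^ 5 - x ^ 4 - x ^ 3 + x + 1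


/-- The characteristic polynomial (in disguise) of the adjacency matrix of `T_{2,3,7}`. -/
def Pchar (t : ℝ) : ℝ := t^10 - 9*t^8 + 27*t^6 - 31*t^4 + 12*t^2 - 1

lemma eig_root {t : ℝ} {x : TVertex 2 3 7 → ℝ} (hx : x ≠ 0)
    (h : (adjT 2 3 7).mulVec x = t • x) : Pchar t = 0 := by
  obtain ⟨v, hv⟩ := Function.ne_iff.mp hx
  simp only [Pi.zero_apply] at hv
  have h0 := congrFun h none
  have h1 := congrFun h (some (Sum.inl 0))
  have h2 := congrFun h (some (Sum.inr (Sum.inl 0)))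
  have h3 := congrFun h (some (Sum.inr (Sum.inl 1)))
  have h4 := congrFun h (some (Sum.inr (Sum.inr 0)))
  have h5 := congrFun h (some (Sum.inr (Sum.inr 1)))
  have h6 := congrFun h (some (Sum.inr (Sum.inr 2)))
  have h7 := congrFun h (some (Sum.inr (Sum.inr 3)))
  have h8 := congrFun h (some (Sum.inr (Sum.inr 4)))
  have h9 := congrFun h (some (Sum.inr (Sum.inr 5)))
  simp only [Pi.smul_apply, smul_eq_mul] at h0 h1 h2 h3 h4 h5 h6 h7 h8 h9
  simp [Matrix.mulVec, dotProduct, Fintype.sum_option, Fintype.sum_sum_type, Fin.sum_univ_one, Fin.sum_univ_two, Fin.sum_univ_six, adjT, pathEntry, tipEntry, show ((3:Fin 6):ℕ)=3 from rfl, show ((4:Fin 6):ℕ)=4 from rfl, show ((5:Fin 6):ℕ)=5 from rfl] at h0 h1 h2 h3 h4 h5 h6 h7 h8 h9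
  have key : Pchar t * x v = 0 := by
    rcases v with - | (i | (i | i))
    · unfold Pchar
      linear_combination ((-1:ℝ)*t + (7:ℝ)*t^3 + (-11:ℝ)*t^5 + (6:ℝ)*t^7 + (-1:ℝ)*t^9) * h0 + ((-1:ℝ) + (7:ℝ)*t^2 + (-11:ℝ)*t^4 + (6:ℝ)*t^6 + (-1:ℝ)*t^8) * h1 + ((1:ℝ)*t^2 + (-6:ℝ)*t^4 + (5:ℝ)*t^6 + (-1:ℝ)*t^8) * h2 + ((1:ℝ)*t + (-6:ℝ)*t^3 + (5:ℝ)*t^5 + (-1:ℝ)*t^7) * h3 + ((3:ℝ)*t^2 + (-7:ℝ)*t^4 + (5:ℝ)*t^6 + (-1:ℝ)*t^8) * h4 + ((1:ℝ)*t + (-4:ℝ)*t^3 + (4:ℝ)*t^5 + (-1:ℝ)*t^7) * h5 + ((-2:ℝ)*t^2 + (3:ℝ)*t^4 + (-1:ℝ)*t^6) * h6 + ((-1:ℝ)*t + (2:ℝ)*t^3 + (-1:ℝ)*t^5) * h7 + ((1:ℝ)*t^2 + (-1:ℝ)*t^4) * h8 + ((1:ℝ)*t + (-1:ℝ)*t^3)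 * h9
    · fin_cases i
      · show Pchar t * x (some (Sum.inl 0)) = 0
        unfold Pchar
        linear_combination ((-1:ℝ) + (7:ℝ)*t^2 + (-11:ℝ)*t^4 + (6:ℝ)*t^6 + (-1:ℝ)*t^8) * h0 + ((-5:ℝ)*t + (20:ℝ)*t^3 + (-21:ℝ)*t^5 + (8:ℝ)*t^7 + (-1:ℝ)*t^9) * h1 + ((1:ℝ)*t + (-6:ℝ)*t^3 + (5:ℝ)*t^5 + (-1:ℝ)*t^7) * h2 + ((1:ℝ) + (-6:ℝ)*t^2 + (5:ℝ)*t^4 + (-1:ℝ)*t^6) * h3 + ((3:ℝ)*t + (-7:ℝ)*t^3 + (5:ℝ)*t^5 + (-1:ℝ)*t^7) * h4 + ((1:ℝ) + (-4:ℝ)*t^2 + (4:ℝ)*t^4 + (-1:ℝ)*t^6) * h5 + ((-2:ℝ)*t + (3:ℝ)*t^3 + (-1:ℝ)*t^5) * h6 + ((-1:ℝ) + (2:ℝ)*t^2 + (-1:ℝ)*t^4) * h7 + ((1:ℝ)*t + (-1:ℝ)*t^3) * h8 + ((1:ℝ) + (-1:ℝ)*t^2) * h9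
    · fin_cases i
      · show Pchar t * x (some (Sum.inr (Sum.inl 0))) = 0
        unfold Pchar
        linear_combination ((1:ℝ)*t^2 + (-6:ℝ)*t^4 + (5:ℝ)*t^6 + (-1:ℝ)*t^8) * h0 + ((1:ℝ)*t + (-6:ℝ)*t^3 + (5:ℝ)*t^5 + (-1:ℝ)*t^7) * h1 + ((-1:ℝ)*t + (10:ℝ)*t^3 + (-15:ℝ)*t^5 + (7:ℝ)*t^7 + (-1:ℝ)*t^9) * h2 + ((-1:ℝ) + (10:ℝ)*t^2 + (-15:ℝ)*t^4 + (7:ℝ)*t^6 + (-1:ℝ)*t^8) * h3 + ((-3:ℝ)*t^3 + (4:ℝ)*t^5 + (-1:ℝ)*t^7) * h4 + ((-1:ℝ)*t^2 + (3:ℝ)*t^4 + (-1:ℝ)*t^6) * h5 + ((2:ℝ)*t^3 + (-1:ℝ)*t^5) * h6 + ((1:ℝ)*t^2 + (-1:ℝ)*t^4) * h7 + ((-1:ℝ)*t^3) * h8 + ((-1:ℝ)*t^2) * h9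
      · show Pchar t * x (some (Sum.inr (Sum.inl 1))) = 0
        unfold Pchar
        linear_combination ((1:ℝ)*t + (-6:ℝ)*t^3 + (5:ℝ)*t^5 + (-1:ℝ)*t^7) * h0 + ((1:ℝ) + (-6:ℝ)*t^2 + (5:ℝ)*t^4 + (-1:ℝ)*t^6) * h1 + ((-1:ℝ) + (10:ℝ)*t^2 + (-15:ℝ)*t^4 + (7:ℝ)*t^6 + (-1:ℝ)*t^8) * h2 + ((-2:ℝ)*t + (16:ℝ)*t^3 + (-20:ℝ)*t^5 + (8:ℝ)*t^7 + (-1:ℝ)*t^9) * h3 + ((-3:ℝ)*t^2 + (4:ℝ)*t^4 + (-1:ℝ)*t^6) * h4 + ((-1:ℝ)*t + (3:ℝ)*t^3 + (-1:ℝ)*t^5) * h5 + ((2:ℝ)*t^2 + (-1:ℝ)*t^4) * h6 + ((1:ℝ)*t + (-1:ℝ)*t^3) * h7 + ((-1:ℝ)*t^2) * h8 + ((-1:ℝ)*t) * h9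
    · fin_cases i
      · show Pchar t * x (some (Sum.inr (Sum.inr 0))) = 0
        unfold Pchar
        linear_combination ((3:ℝ)*t^2 + (-7:ℝ)*t^4 + (5:ℝ)*t^6 + (-1:ℝ)*t^8) * h0 + ((3:ℝ)*t + (-7:ℝ)*t^3 + (5:ℝ)*t^5 + (-1:ℝ)*t^7) * h1 + ((-3:ℝ)*t^3 + (4:ℝ)*t^5 + (-1:ℝ)*t^7) * h2 + ((-3:ℝ)*t^2 + (4:ℝ)*t^4 + (-1:ℝ)*t^6) * h3 + ((-3:ℝ)*t + (13:ℝ)*t^3 + (-16:ℝ)*t^5 + (7:ℝ)*t^7 + (-1:ℝ)*t^9) * h4 + ((-1:ℝ) + (6:ℝ)*t^2 + (-11:ℝ)*t^4 + (6:ℝ)*t^6 + (-1:ℝ)*t^8) * h5 + ((2:ℝ)*t + (-7:ℝ)*t^3 + (5:ℝ)*t^5 + (-1:ℝ)*t^7) * h6 + ((1:ℝ) + (-4:ℝ)*t^2 + (4:ℝ)*t^4 + (-1:ℝ)*t^6) * h7 + ((-1:ℝ)*t + (3:ℝ)*t^3 + (-1:ℝ)*t^5) * h8 + ((-1:ℝ)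 + (3:ℝ)*t^2 + (-1:ℝ)*t^4) * h9
      · show Pchar t * x (some (Sum.inr (Sum.inr 1))) = 0
        unfold Pchar
        linear_combination ((1:ℝ)*t + (-4:ℝ)*t^3 + (4:ℝ)*t^5 + (-1:ℝ)*t^7) * h0 + ((1:ℝ) + (-4:ℝ)*t^2 + (4:ℝ)*t^4 + (-1:ℝ)*t^6) * h1 + ((-1:ℝ)*t^2 + (3:ℝ)*t^4 + (-1:ℝ)*t^6) * h2 + ((-1:ℝ)*t + (3:ℝ)*t^3 + (-1:ℝ)*t^5) * h3 + ((-1:ℝ) + (6:ℝ)*t^2 + (-11:ℝ)*t^4 + (6:ℝ)*t^6 + (-1:ℝ)*t^8) * h4 + ((-2:ℝ)*t + (10:ℝ)*t^3 + (-15:ℝ)*t^5 + (7:ℝ)*t^7 + (-1:ℝ)*t^9) * h5 + ((4:ℝ)*t^2 + (-10:ℝ)*t^4 + (6:ℝ)*t^6 + (-1:ℝ)*t^8) * h6 + ((2:ℝ)*t + (-6:ℝ)*t^3 + (5:ℝ)*t^5 + (-1:ℝ)*t^7) * h7 + ((-2:ℝ)*t^2 + (4:ℝ)*t^4 + (-1:ℝ)*t^6)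 * h8 + ((-2:ℝ)*t + (4:ℝ)*t^3 + (-1:ℝ)*t^5) * h9
      · show Pchar t * x (some (Sum.inr (Sum.inr 2))) = 0
        unfold Pchar
        linear_combination ((-2:ℝ)*t^2 + (3:ℝ)*t^4 + (-1:ℝ)*t^6) * h0 + ((-2:ℝ)*t + (3:ℝ)*t^3 + (-1:ℝ)*t^5) * h1 + ((2:ℝ)*t^3 + (-1:ℝ)*t^5) * h2 + ((2:ℝ)*t^2 + (-1:ℝ)*t^4) * h3 + ((2:ℝ)*t + (-7:ℝ)*t^3 + (5:ℝ)*t^5 + (-1:ℝ)*t^7) * h4 + ((4:ℝ)*t^2 + (-10:ℝ)*t^4 + (6:ℝ)*t^6 + (-1:ℝ)*t^8) * h5 + ((-2:ℝ)*t + (11:ℝ)*t^3 + (-15:ℝ)*t^5 + (7:ℝ)*t^7 + (-1:ℝ)*t^9) * h6 + ((-1:ℝ) + (6:ℝ)*t^2 + (-10:ℝ)*t^4 + (6:ℝ)*t^6 + (-1:ℝ)*t^8) * h7 + ((1:ℝ)*t + (-5:ℝ)*t^3 + (5:ℝ)*t^5 + (-1:ℝ)*t^7) * h8 + ((1:ℝ)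 + (-5:ℝ)*t^2 + (5:ℝ)*t^4 + (-1:ℝ)*t^6) * h9
      · show Pchar t * x (some (Sum.inr (Sum.inr 3))) = 0
        unfold Pchar
        linear_combination ((-1:ℝ)*t + (2:ℝ)*t^3 + (-1:ℝ)*t^5) * h0 + ((-1:ℝ) + (2:ℝ)*t^2 + (-1:ℝ)*t^4) * h1 + ((1:ℝ)*t^2 + (-1:ℝ)*t^4) * h2 + ((1:ℝ)*t + (-1:ℝ)*t^3) * h3 + ((1:ℝ) + (-4:ℝ)*t^2 + (4:ℝ)*t^4 + (-1:ℝ)*t^6) * h4 + ((2:ℝ)*t + (-6:ℝ)*t^3 + (5:ℝ)*t^5 + (-1:ℝ)*t^7) * h5 + ((-1:ℝ) + (6:ℝ)*t^2 + (-10:ℝ)*t^4 + (6:ℝ)*t^6 + (-1:ℝ)*t^8) * h6 + ((-3:ℝ)*t + (12:ℝ)*t^3 + (-15:ℝ)*t^5 + (7:ℝ)*t^7 + (-1:ℝ)*t^9) * h7 + ((3:ℝ)*t^2 + (-9:ℝ)*t^4 + (6:ℝ)*t^6 + (-1:ℝ)*t^8) * h8 + ((3:ℝ)*t + (-9:ℝ)*t^3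 + (6:ℝ)*t^5 + (-1:ℝ)*t^7) * h9
      · show Pchar t * x (some (Sum.inr (Sum.inr 4))) = 0
        unfold Pchar
        linear_combination ((1:ℝ)*t^2 + (-1:ℝ)*t^4) * h0 + ((1:ℝ)*t + (-1:ℝ)*t^3) * h1 + ((-1:ℝ)*t^3) * h2 + ((-1:ℝ)*t^2) * h3 + ((-1:ℝ)*t + (3:ℝ)*t^3 + (-1:ℝ)*t^5) * h4 + ((-2:ℝ)*t^2 + (4:ℝ)*t^4 + (-1:ℝ)*t^6) * h5 + ((1:ℝ)*t + (-5:ℝ)*t^3 + (5:ℝ)*t^5 + (-1:ℝ)*t^7) * h6 + ((3:ℝ)*t^2 + (-9:ℝ)*t^4 + (6:ℝ)*t^6 + (-1:ℝ)*t^8) * h7 + ((-1:ℝ)*t + (8:ℝ)*t^3 + (-14:ℝ)*t^5 + (7:ℝ)*t^7 + (-1:ℝ)*t^9) * h8 + ((-1:ℝ) + (8:ℝ)*t^2 + (-14:ℝ)*t^4 + (7:ℝ)*t^6 + (-1:ℝ)*t^8) * h9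
      · show Pchar t * x (some (Sum.inr (Sum.inr 5))) = 0
        unfold Pchar
        linear_combination ((1:ℝ)*t + (-1:ℝ)*t^3) * h0 + ((1:ℝ) + (-1:ℝ)*t^2) * h1 + ((-1:ℝ)*t^2) * h2 + ((-1:ℝ)*t) * h3 + ((-1:ℝ) + (3:ℝ)*t^2 + (-1:ℝ)*t^4) * h4 + ((-2:ℝ)*t + (4:ℝ)*t^3 + (-1:ℝ)*t^5) * h5 + ((1:ℝ) + (-5:ℝ)*t^2 + (5:ℝ)*t^4 + (-1:ℝ)*t^6) * h6 + ((3:ℝ)*t + (-9:ℝ)*t^3 + (6:ℝ)*t^5 + (-1:ℝ)*t^7) * h7 + ((-1:ℝ) + (8:ℝ)*t^2 + (-14:ℝ)*t^4 + (7:ℝ)*t^6 + (-1:ℝ)*t^8) * h8 + ((-4:ℝ)*t + (17:ℝ)*t^3 + (-20:ℝ)*t^5 + (8:ℝ)*t^7 + (-1:ℝ)*t^9) * h9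
  exact (mul_eq_zero.mp key).resolve_right hv

/-- An explicit eigenvector for an eigenvalue `t > 2` which is a root of `Pchar`. -/
noncomputable def eigvec (t : ℝ) : TVertex 2 3 7 → ℝ := fun v =>
  match v with
  | none => t^6-5*t^4+6*t^2-1
  | some (Sum.inl _) => (t^6-5*t^4+6*t^2-1)/t
  | some (Sum.inr (Sum.inl i)) =>
      if i = 0 then t*(t^6-5*t^4+6*t^2-1)/(t^2-1) else (t^6-5*t^4+6*t^2-1)/(t^2-1)
  | some (Sum.inr (Sum.inr i)) =>
      if i = 0 then t^5-4*t^3+3*t else if i = 1 then t^4-3*t^2+1 else if i = 2 then t^3-2*t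
      else if i = 3 then t^2-1 else if i = 4 then t else 1

lemma root_eig {t : ℝ} (ht : 2 < t) (hP : Pchar t = 0) :
    ∃ x : TVertex 2 3 7 → ℝ, x ≠ 0 ∧ (adjT 2 3 7).mulVec x = t • x := by
  have ht0 : t ≠ 0 := by nlinarith
  have ht1 : t^2 - 1 ≠ 0 := by nlinarith
  have hP' : t^10 - 9*t^8 + 27*t^6 - 31*t^4 + 12*t^2 - 1 = 0 := hP
  refine ⟨eigvec t, ?_, ?_⟩
  · intro hzero
    have := congrFun hzero (some (Sum.inr (Sum.inr 5)))
    simp [eigvec] at this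
  · funext v
    rcases v with - | (i | (i | i))
    · show (adjT 2 3 7).mulVec (eigvec t) (none) = (t • eigvec t) (none)
      simp [Matrix.mulVec, dotProduct, Fintype.sum_option, Fintype.sum_sum_type, Fin.sum_univ_one, Fin.sum_univ_two, Fin.sum_univ_six, adjT, pathEntry, tipEntry, show ((3:Fin 6):ℕ)=3 from rfl, show ((4:Fin 6):ℕ)=4 from rfl, show ((5:Fin 6):ℕ)=5 from rfl, eigvec, Pi.smul_apply, smul_eq_mul]
      field_simp
      linear_combination (-1 : ℝ) * hP'
    · fin_cases i
      · show (adjT 2 3 7).mulVec (eigvec t) (some (Sum.inl 0)) = (t • eigvec t) (some (Sum.inl 0))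
        simp [Matrix.mulVec, dotProduct, Fintype.sum_option, Fintype.sum_sum_type, Fin.sum_univ_one, Fin.sum_univ_two, Fin.sum_univ_six, adjT, pathEntry, tipEntry, show ((3:Fin 6):ℕ)=3 from rfl, show ((4:Fin 6):ℕ)=4 from rfl, show ((5:Fin 6):ℕ)=5 from rfl, eigvec, Pi.smul_apply, smul_eq_mul]
        try (first
          | (field_simp; ring)
          | field_simp
          | ring)
    · fin_cases i
      · show (adjT 2 3 7).mulVec (eigvec t) (some (Sum.inr (Sum.inl 0))) = (t • eigvec t) (some (Sum.inr (Sum.inl 0)))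
        simp [Matrix.mulVec, dotProduct, Fintype.sum_option, Fintype.sum_sum_type, Fin.sum_univ_one, Fin.sum_univ_two, Fin.sum_univ_six, adjT, pathEntry, tipEntry, show ((3:Fin 6):ℕ)=3 from rfl, show ((4:Fin 6):ℕ)=4 from rfl, show ((5:Fin 6):ℕ)=5 from rfl, eigvec, Pi.smul_apply, smul_eq_mul]
        try (first
          | (field_simp; ring)
          | field_simp
          | ring)
      · show (adjT 2 3 7).mulVec (eigvec t) (some (Sum.inr (Sum.inl 1))) = (t • eigvec t) (some (Sum.inr (Sum.inl 1)))
        simp [Matrix.mulVec, dotProduct, Fintype.sum_option, Fintype.sum_sum_type, Fin.sum_univ_one, Fin.sum_univ_two, Fin.sum_univ_six, adjT, pathEntry, tipEntry, show ((3:Fin 6):ℕ)=3 from rfl, show ((4:Fin 6):ℕ)=4 from rfl, show ((5:Fin 6):ℕ)=5 from rfl, eigvec, Pi.smul_apply, smul_eq_mul]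
        try (first
          | (field_simp; ring)
          | field_simp
          | ring)
    · fin_cases i
      · show (adjT 2 3 7).mulVec (eigvec t) (some (Sum.inr (Sum.inr 0))) = (t • eigvec t) (some (Sum.inr (Sum.inr 0)))
        simp [Matrix.mulVec, dotProduct, Fintype.sum_option, Fintype.sum_sum_type, Fin.sum_univ_one, Fin.sum_univ_two, Fin.sum_univ_six, adjT, pathEntry, tipEntry, show ((3:Fin 6):ℕ)=3 from rfl, show ((4:Fin 6):ℕ)=4 from rfl, show ((5:Fin 6):ℕ)=5 from rfl, eigvec, Pi.smul_apply, smul_eq_mul]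
        try (first
          | (field_simp; ring)
          | field_simp
          | ring)
      · show (adjT 2 3 7).mulVec (eigvec t) (some (Sum.inr (Sum.inr 1))) = (t • eigvec t) (some (Sum.inr (Sum.inr 1)))
        simp [Matrix.mulVec, dotProduct, Fintype.sum_option, Fintype.sum_sum_type, Fin.sum_univ_one, Fin.sum_univ_two, Fin.sum_univ_six, adjT, pathEntry, tipEntry, show ((3:Fin 6):ℕ)=3 from rfl, show ((4:Fin 6):ℕ)=4 from rfl, show ((5:Fin 6):ℕ)=5 from rfl, eigvec, Pi.smul_apply, smul_eq_mul]
        try (first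
          | (field_simp; ring)
          | field_simp
          | ring)
      · show (adjT 2 3 7).mulVec (eigvec t) (some (Sum.inr (Sum.inr 2))) = (t • eigvec t) (some (Sum.inr (Sum.inr 2)))
        simp [Matrix.mulVec, dotProduct, Fintype.sum_option, Fintype.sum_sum_type, Fin.sum_univ_one, Fin.sum_univ_two, Fin.sum_univ_six, adjT, pathEntry, tipEntry, show ((3:Fin 6):ℕ)=3 from rfl, show ((4:Fin 6):ℕ)=4 from rfl, show ((5:Fin 6):ℕ)=5 from rfl, eigvec, Pi.smul_apply, smul_eq_mul]
        try (first
          | (field_simp; ring)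
          | field_simp
          | ring)
      · show (adjT 2 3 7).mulVec (eigvec t) (some (Sum.inr (Sum.inr 3))) = (t • eigvec t) (some (Sum.inr (Sum.inr 3)))
        simp [Matrix.mulVec, dotProduct, Fintype.sum_option, Fintype.sum_sum_type, Fin.sum_univ_one, Fin.sum_univ_two, Fin.sum_univ_six, adjT, pathEntry, tipEntry, show ((3:Fin 6):ℕ)=3 from rfl, show ((4:Fin 6):ℕ)=4 from rfl, show ((5:Fin 6):ℕ)=5 from rfl, eigvec, Pi.smul_apply, smul_eq_mul]
        try (first
          | (field_simp; ring)
          | field_simp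
          | ring)
      · show (adjT 2 3 7).mulVec (eigvec t) (some (Sum.inr (Sum.inr 4))) = (t • eigvec t) (some (Sum.inr (Sum.inr 4)))
        simp [Matrix.mulVec, dotProduct, Fintype.sum_option, Fintype.sum_sum_type, Fin.sum_univ_one, Fin.sum_univ_two, Fin.sum_univ_six, adjT, pathEntry, tipEntry, show ((3:Fin 6):ℕ)=3 from rfl, show ((4:Fin 6):ℕ)=4 from rfl, show ((5:Fin 6):ℕ)=5 from rfl, eigvec, Pi.smul_apply, smul_eq_mul]
        try (first
          | (field_simp; ring)
          | field_simp
          | ring)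
      · show (adjT 2 3 7).mulVec (eigvec t) (some (Sum.inr (Sum.inr 5))) = (t • eigvec t) (some (Sum.inr (Sum.inr 5)))
        simp [Matrix.mulVec, dotProduct, Fintype.sum_option, Fintype.sum_sum_type, Fin.sum_univ_one, Fin.sum_univ_two, Fin.sum_univ_six, adjT, pathEntry, tipEntry, show ((3:Fin 6):ℕ)=3 from rfl, show ((4:Fin 6):ℕ)=4 from rfl, show ((5:Fin 6):ℕ)=5 from rfl, eigvec, Pi.smul_apply, smul_eq_mul]
        try (first
          | (field_simp; ring)
          | field_simp
          | ring)

lemma pchar_finite : {y : ℝ | Pchar y = 0}.Finite := by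
  have hp : (Polynomial.X^10 - 9*Polynomial.X^8 + 27*Polynomial.X^6 - 31*Polynomial.X^4
      + 12*Polynomial.X^2 - 1 : Polynomial ℝ) ≠ 0 := by
    intro hcontra
    have := congrArg (Polynomial.eval 0) hcontra
    simp at this
  have hfin := Polynomial.finite_setOf_isRoot hp
  refine Set.Finite.subset hfin ?_
  intro y hy
  simp only [Set.mem_setOf_eq, Polynomial.IsRoot, Polynomial.eval_sub, Polynomial.eval_add,
    Polynomial.eval_mul, Polynomial.eval_pow, Polynomial.eval_X, Polynomial.eval_one,
    Polynomial.eval_ofNat]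
  have : Pchar y = 0 := hy
  unfold Pchar at this
  linarith

lemma lehmer_eq {m μ : ℝ} (hm : m ≠ 0) (h : m + m⁻¹ + 2 = μ^2) :
    lehmerPoly m = m^5 * Pchar μ := by
  have e : Pchar μ = (μ^2)^5 - 9*(μ^2)^4 + 27*(μ^2)^3 - 31*(μ^2)^2 + 12*(μ^2) - 1 := by
    unfold Pchar; ring
  rw [← h] at e
  rw [e]
  unfold lehmerPoly
  field_simp
  ring
/-- If `μ = μ(2,3,7)` then `μ > 2` and the unique `m > 1` with
`m + m⁻¹ + 2 = μ²` is the largest real root of Lehmer's polynomial,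
i.e. `m` is Lehmer's number. -/

theorem muT_237_gives_lehmer_number :
    2 < muT 2 3 7 ∧
    ∀ m : ℝ, 1 < m → m + m⁻¹ + 2 = (muT 2 3 7) ^ 2 →
      lehmerPoly m = 0 ∧ ∀ x : ℝ, lehmerPoly x = 0 → x ≤ m := by
  set S := {μ : ℝ | ∃ x : TVertex 2 3 7 → ℝ, x ≠ 0 ∧ (adjT 2 3 7).mulVec x = μ • x} with hS
  have hSsub : S ⊆ {y : ℝ | Pchar y = 0} := by
    rintro μ ⟨x, hx, hx2⟩
    exact eig_root hx hx2
  have hSfin : S.Finite := pchar_finite.subset hSsub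
  have hcont : ContinuousOn Pchar (Set.Icc 2 2.02) := by
    unfold Pchar; fun_prop
  have hIVT := intermediate_value_Icc (by norm_num : (2:ℝ) ≤ 2.02) hcont
  have h0mem : (0:ℝ) ∈ Set.Icc (Pchar 2) (Pchar 2.02) := by
    constructor <;> norm_num [Pchar]
  obtain ⟨μ₀, hμ₀mem, hμ₀root⟩ := hIVT h0mem
  have hμ₀2 : 2 < μ₀ := by
    rcases lt_or_eq_of_le hμ₀mem.1 with h | h
    · exact h
    · exfalso; rw [← h] at hμ₀root; norm_num [Pchar] at hμ₀root
  have hμ₀S : μ₀ ∈ S := root_eig hμ₀2 hμ₀root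
  have hSne : S.Nonempty := ⟨μ₀, hμ₀S⟩
  have hbdd : BddAbove S := hSfin.bddAbove
  have hμmem : muT 2 3 7 ∈ S := hSne.csSup_mem hSfin
  have hμ2 : 2 < muT 2 3 7 := lt_of_lt_of_le hμ₀2 (le_csSup hbdd hμ₀S)
  have hμroot : Pchar (muT 2 3 7) = 0 := hSsub hμmem
  refine ⟨hμ2, ?_⟩
  intro m hm1 hmeq
  have hm0 : m ≠ 0 := by positivity
  have hLm : lehmerPoly m = 0 := by
    rw [lehmer_eq hm0 hmeq, hμroot, mul_zero]
  refine ⟨hLm, ?_⟩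
  intro x hx
  rcases le_or_gt x 1 with hx1 | hx1
  · linarith
  · have hx0 : x ≠ 0 := by positivity
    have hxi : x * x⁻¹ = 1 := mul_inv_cancel₀ hx0
    have hs4 : 4 < x + x⁻¹ + 2 := by nlinarith [sq_nonneg (x - 1)]
    set t : ℝ := Real.sqrt (x + x⁻¹ + 2) with htdef
    have hts : t^2 = x + x⁻¹ + 2 := Real.sq_sqrt (by linarith)
    have ht2 : 2 < t := by
      nlinarith [Real.sqrt_nonneg (x + x⁻¹ + 2)]
    have hPt : Pchar t = 0 := by
      have hid := lehmer_eq hx0 hts.symm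
      rw [hx] at hid
      have hx5 : x^5 ≠ 0 := pow_ne_zero _ hx0
      exact (mul_eq_zero.mp hid.symm).resolve_left hx5
    have htS : t ∈ S := root_eig ht2 hPt
    have htμ : t ≤ muT 2 3 7 := le_csSup hbdd htS
    have hsq : t^2 ≤ (muT 2 3 7)^2 := by nlinarith
    have hkey : x + x⁻¹ ≤ m + m⁻¹ := by nlinarith
    have hmi : m * m⁻¹ = 1 := mul_inv_cancel₀ hm0
    by_contra hcon
    push_neg at hcon
    have hmx1 : 1 < m * x := by nlinarith
    have hprod : m * x * (x + x⁻¹) ≤ m * x * (m + m⁻¹) :=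
      mul_le_mul_of_nonneg_left hkey (by nlinarith)
    nlinarith [hprod, hxi, hmi, hmx1, hcon, hx1, hm1]
end
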